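/- Vertical jumps are redundant: let D'_n be the subgraph of D_n obtained by deleting all vertical jumps (all edges (k+1,j)→(i,j) with 0 ≤ i ≤ k and k+1 < j ≤ n). Then for every vertex (i,j) with 0 ≤ i ≤ j ≤ n, the minimum total weight over directed paths from (−1,−1) to (i,j) in D'_n equals the minimum total weight over directed paths from (−1,−1) to (i,j) in D_n, and both equal Tree[i,j]. -/

import Mathlib

/-- The weighted edges of the dynamic graph `D_n`.  Vertices live in `ℤ × ℤ`
(the source is `(-1,-1)`; all other vertices `(i,j)` have `0 ≤ i ≤ j ≤ n`).
`Edge n Q w T u v c` means there is an edge from `u` to `v` of weight `c`. -/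
inductive Edge (n : ℕ) (Q : ℕ → ℝ) (w T : ℕ → ℕ → ℝ) : ℤ × ℤ → ℤ × ℤ → ℝ → Prop
  | init (i : ℕ) (h : i ≤ n) :
      Edge n Q w T (-1, -1) ((i : ℤ), (i : ℤ)) (Q i)
  | horiz (i j : ℕ) (h1 : i ≤ j) (h2 : j < n) :
      Edge n Q w T ((i : ℤ), (j : ℤ)) ((i : ℤ), ((j + 1 : ℕ) : ℤ))
        (Q (j + 1) + w i (j + 1))
  | vert (i j : ℕ) (h0 : 0 < i) (h1 : i ≤ j) (h2 : j ≤ n) :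
      Edge n Q w T ((i : ℤ), (j : ℤ)) (((i - 1 : ℕ) : ℤ), (j : ℤ))
        (Q (i - 1) + w (i - 1) j)
  | hjump (i k j : ℕ) (h1 : i < k) (h2 : k < j) (h3 : j ≤ n) :
      Edge n Q w T ((i : ℤ), (k : ℤ)) ((i : ℤ), (j : ℤ)) (T (k + 1) j + w i j)
  | vjump (i k j : ℕ) (h1 : i ≤ k) (h2 : k + 1 < j) (h3 : j ≤ n) :
      Edge n Q w T (((k + 1 : ℕ) : ℤ), (j : ℤ)) ((i : ℤ), (j : ℤ)) (T i k + w i j)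

/-- The weighted edges of the subgraph `D'_n` of `D_n` obtained by deleting all
vertical jumps (all edges `(k+1,j)→(i,j)` with `0 ≤ i ≤ k` and `k+1 < j ≤ n`). -/
inductive EdgeNoVJump (n : ℕ) (Q : ℕ → ℝ) (w T : ℕ → ℕ → ℝ) :
    ℤ × ℤ → ℤ × ℤ → ℝ → Prop
  | init (i : ℕ) (h : i ≤ n) :
      EdgeNoVJump n Q w T (-1, -1) ((i : ℤ), (i : ℤ)) (Q i)
  | horiz (i j : ℕ) (h1 : i ≤ j) (h2 : j < n) :
      EdgeNoVJump n Q w T ((i : ℤ), (j : ℤ)) ((i : ℤ), ((j + 1 : ℕ) : ℤ))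
        (Q (j + 1) + w i (j + 1))
  | vert (i j : ℕ) (h0 : 0 < i) (h1 : i ≤ j) (h2 : j ≤ n) :
      EdgeNoVJump n Q w T ((i : ℤ), (j : ℤ)) (((i - 1 : ℕ) : ℤ), (j : ℤ))
        (Q (i - 1) + w (i - 1) j)
  | hjump (i k j : ℕ) (h1 : i < k) (h2 : k < j) (h3 : j ≤ n) :
      EdgeNoVJump n Q w T ((i : ℤ), (k : ℤ)) ((i : ℤ), (j : ℤ))
        (T (k + 1) j + w i j)

/-- `Walk E u v c` : there is a directed path (a finite sequence of consecutive
edges) from `u` to `v` of total weight `c` in the graph whose weighted edge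
relation is `E`. -/
inductive Walk {α : Type*} (E : α → α → ℝ → Prop) : α → α → ℝ → Prop
  | nil (a : α) : Walk E a a 0
  | cons {a b d : α} {c c' : ℝ} (h : E a b c) (hw : Walk E b d c') :
      Walk E a d (c + c')


lemma Walk.of_eq {α : Type*} {E : α → α → ℝ → Prop} {u v : α} {c c' : ℝ}
    (h : Walk E u v c) (e : c = c') : Walk E u v c' := e ▸ h

lemma Walk.mono {α : Type*} {E E' : α → α → ℝ → Prop}
    (hE : ∀ u v c, E u v c → E' u v c) {u v : α} {c : ℝ}
    (h : Walk E u v c) : Walk E' u v c := by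
  induction h with
  | nil a => exact Walk.nil a
  | cons h hw ih => exact Walk.cons (hE _ _ _ h) ih

lemma Walk.snoc {α : Type*} {E : α → α → ℝ → Prop} {u v x : α} {c c' : ℝ}
    (h : Walk E u v c) (he : E v x c') : Walk E u x (c + c') := by
  induction h with
  | nil a => exact (Walk.cons he (Walk.nil x)).of_eq (by ring)
  | cons h hw ih => exact (Walk.cons h (ih he)).of_eq (by ring)

def phiPot (T : ℕ → ℕ → ℝ) (p : ℤ × ℤ) : ℝ :=
  if p.1 = -1 then 0 else T p.1.toNat p.2.toNat

lemma phiPot_nat (T : ℕ → ℕ → ℝ) (i j : ℕ) :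
    phiPot T ((i : ℤ), (j : ℤ)) = T i j := by
  simp only [phiPot]
  rw [if_neg (by omega)]
  simp

lemma phiPot_src (T : ℕ → ℕ → ℝ) : phiPot T (-1, -1) = 0 := by
  simp [phiPot]

lemma edgeNoVJump_sub {n Q} {w T : ℕ → ℕ → ℝ} {u v c}
    (h : EdgeNoVJump n Q w T u v c) : Edge n Q w T u v c := by
  cases h with
  | init i h => exact Edge.init i h
  | horiz i j h1 h2 => exact Edge.horiz i j h1 h2
  | vert i j h0 h1 h2 => exact Edge.vert i j h0 h1 h2
  | hjump i k j h1 h2 h3 => exact Edge.hjump i k j h1 h2 h3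

section Main
variable (n : ℕ) (Q : ℕ → ℝ) (w : ℕ → ℕ → ℝ) (Tree : ℕ → ℕ → ℝ)
variable (hTree0 : ∀ i, i ≤ n → Tree i i = Q i)
variable (hTree : ∀ i j (hij : i < j), j ≤ n →
      Tree i j = (Finset.Ico i j).inf' (Finset.nonempty_Ico.mpr hij)
        (fun k => Tree i k + Tree (k + 1) j + w i j))

include hTree0 hTree in
lemma edge_bound {u v c} (h : Edge n Q w Tree u v c) :
    phiPot Tree v ≤ phiPot Tree u + c := by
  cases h with
  | init i h =>
    rw [phiPot_src, phiPot_nat, hTree0 i h]; linarith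
  | horiz i j h1 h2 =>
    rw [phiPot_nat, phiPot_nat, hTree i (j + 1) (by omega) (by omega)]
    have hm : j ∈ Finset.Ico i (j + 1) := by simp [Finset.mem_Ico]; omega
    have hle := Finset.inf'_le (fun k => Tree i k + Tree (k + 1) (j + 1) + w i (j + 1)) hm
    rw [hTree0 (j + 1) (by omega)] at hle
    linarith
  | vert i j h0 h1 h2 =>
    rw [phiPot_nat, phiPot_nat, hTree (i - 1) j (by omega) h2]
    have hm : i - 1 ∈ Finset.Ico (i - 1) j := by simp [Finset.mem_Ico]; omega
    have := Finset.inf'_le (fun k => Tree (i - 1) k + Tree (k + 1) j + w (i - 1) j) hm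
    rw [hTree0 (i - 1) (by omega), show i - 1 + 1 = i by omega] at this
    linarith
  | hjump i k j h1 h2 h3 =>
    rw [phiPot_nat, phiPot_nat, hTree i j (by omega) h3]
    have hm : k ∈ Finset.Ico i j := by simp [Finset.mem_Ico]; omega
    have := Finset.inf'_le (fun k => Tree i k + Tree (k + 1) j + w i j) hm
    linarith
  | vjump i k j h1 h2 h3 =>
    rw [phiPot_nat, phiPot_nat, hTree i j (by omega) h3]
    have hm : k ∈ Finset.Ico i j := by simp [Finset.mem_Ico]; omega
    have := Finset.inf'_le (fun k => Tree i k + Tree (k + 1) j + w i j) hm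
    linarith

include hTree0 hTree in
lemma walk_bound {u v c} (h : Walk (Edge n Q w Tree) u v c) :
    phiPot Tree v ≤ phiPot Tree u + c := by
  induction h with
  | nil a => simp
  | cons h hw ih =>
    have := edge_bound n Q w Tree hTree0 hTree h
    linarith

include hTree0 hTree in
lemma exists_walk : ∀ d i j, i ≤ j → j ≤ n → j - i ≤ d →
    Walk (EdgeNoVJump n Q w Tree) (-1, -1) ((i : ℤ), (j : ℤ)) (Tree i j) := by
  intro d
  induction d with
  | zero =>
    intro i j hij hjn hd
    have : i = j := by omega
    subst this
    exact (Walk.cons (EdgeNoVJump.init i hjn) (Walk.nil _)).of_eq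
      (by rw [hTree0 i hjn]; ring)
  | succ d ih =>
    intro i j hij hjn hd
    rcases eq_or_lt_of_le hij with rfl | hlt
    · exact (Walk.cons (EdgeNoVJump.init i hjn) (Walk.nil _)).of_eq
        (by rw [hTree0 i hjn]; ring)
    · obtain ⟨k, hk, hke⟩ := Finset.exists_mem_eq_inf'
        (Finset.nonempty_Ico.mpr hlt)
        (fun k => Tree i k + Tree (k + 1) j + w i j)
      simp only [Finset.mem_Ico] at hk
      have hTij : Tree i j = Tree i k + Tree (k + 1) j + w i j := by
        rw [hTree i j hlt hjn]; exact hke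
      rcases eq_or_lt_of_le hk.1 with rfl | hik
      · -- k = i : use vertical unit edge from (i+1, j)
        have hw1 : Walk (EdgeNoVJump n Q w Tree) (-1, -1)
            (((i + 1 : ℕ) : ℤ), (j : ℤ)) (Tree (i + 1) j) :=
          ih (i + 1) j (by omega) hjn (by omega)
        have he : EdgeNoVJump n Q w Tree (((i + 1 : ℕ) : ℤ), (j : ℤ))
            ((i : ℤ), (j : ℤ)) (Q i + w i j) := by
          have := EdgeNoVJump.vert (n := n) (Q := Q) (w := w) (T := Tree)
            (i + 1) j (by omega) (by omega) hjn
          simpa using this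
        exact (hw1.snoc he).of_eq (by rw [hTij, hTree0 i (by omega)]; ring)
      · -- i < k : use horizontal jump from (i, k)
        have hw1 : Walk (EdgeNoVJump n Q w Tree) (-1, -1)
            ((i : ℤ), (k : ℤ)) (Tree i k) :=
          ih i k (by omega) (by omega) (by omega)
        have he : EdgeNoVJump n Q w Tree ((i : ℤ), (k : ℤ))
            ((i : ℤ), (j : ℤ)) (Tree (k + 1) j + w i j) :=
          EdgeNoVJump.hjump i k j hik hk.2 hjn
        exact (hw1.snoc he).of_eq (by rw [hTij]; ring)

end Main

/-- Vertical jumps are redundant: for every vertex `(i,j)` with `0 ≤ i ≤ j ≤ n`,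
the minimum total weight over directed paths from `(−1,−1)` to `(i,j)` in the
subgraph `D'_n` (with the vertical jumps deleted) equals the minimum total
weight over directed paths from `(−1,−1)` to `(i,j)` in `D_n`, and both equal
`Tree[i,j]`. -/
theorem stmt9 (n : ℕ) (hn : 1 ≤ n) (P Q : ℕ → ℝ)
    (hP : ∀ t, 1 ≤ t → t ≤ n → 0 ≤ P t) (hQ : ∀ t, t ≤ n → 0 ≤ Q t)
    (w : ℕ → ℕ → ℝ)
    (hw : ∀ i j, i ≤ j → j ≤ n →
      w i j = (∑ t ∈ Finset.Icc (i + 1) j, P t) + ∑ t ∈ Finset.Icc i j, Q t)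
    (Tree : ℕ → ℕ → ℝ)
    (hTree0 : ∀ i, i ≤ n → Tree i i = Q i)
    (hTree : ∀ i j (hij : i < j), j ≤ n →
      Tree i j = (Finset.Ico i j).inf' (Finset.nonempty_Ico.mpr hij)
        (fun k => Tree i k + Tree (k + 1) j + w i j)) :
    ∀ i j, i ≤ j → j ≤ n →
      IsLeast { c : ℝ |
          Walk (EdgeNoVJump n Q w Tree) (-1, -1) ((i : ℤ), (j : ℤ)) c }
        (Tree i j) ∧
      IsLeast { c : ℝ |
          Walk (Edge n Q w Tree) (-1, -1) ((i : ℤ), (j : ℤ)) c }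
        (Tree i j) := by
  intro i j hij hjn
  have hmem : Walk (EdgeNoVJump n Q w Tree) (-1, -1) ((i : ℤ), (j : ℤ)) (Tree i j) :=
    exists_walk n Q w Tree hTree0 hTree (j - i) i j hij hjn le_rfl
  have hlb : ∀ c, Walk (Edge n Q w Tree) (-1, -1) ((i : ℤ), (j : ℤ)) c → Tree i j ≤ c := by
    intro c hc
    have := walk_bound n Q w Tree hTree0 hTree hc
    rwa [phiPot_src, phiPot_nat, zero_add] at this
  exact ⟨⟨hmem, fun c hc => hlb c (hc.mono (fun _ _ _ => edgeNoVJump_sub))⟩,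
    ⟨hmem.mono (fun _ _ _ => edgeNoVJump_sub), fun c hc => hlb c hc⟩⟩
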